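/- Let A = (a_{ij}) ∈ ℝ^{d×d} satisfy a_{ii} = 1 for all i, a_{ji} = −a_{ij} for all i ≠ j, and −1 ≤ a_{ij} + a_{jk} + a_{ki} ≤ 1 for all pairwise distinct i,j,k. Then for every permutation σ of [d], writing k for the number of cycles of σ of length at least 2 (so k = 0 iff σ is the identity), one has Σ_{i∈[d]} a_{i,σ(i)} ≤ d − 2k. -/

import Mathlib

open scoped BigOperators

section aux
variable {d : ℕ} (A : Matrix (Fin d) (Fin d) ℝ)

lemma path_sum_le
    (hskew : ∀ i j, i ≠ j → A j i = -A i j)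
    (htriple : ∀ i j k, i ≠ j → j ≠ k → i ≠ k →
      -1 ≤ A i j + A j k + A k i ∧ A i j + A j k + A k i ≤ 1) :
    ∀ n, 1 ≤ n → ∀ g : ℕ → Fin d, (∀ i ≤ n, ∀ j ≤ n, g i = g j → i = j) →
      ∑ j ∈ Finset.range n, A (g j) (g (j+1)) ≤ (n : ℝ) - 1 + A (g 0) (g n) := by
  intro n
  induction n with
  | zero => omega
  | succ n ih =>
    intro _ g hinj
    rcases Nat.eq_zero_or_pos n with h1 | h1
    · subst h1; simp
    · have hinj' : ∀ i ≤ n, ∀ j ≤ n, g i = g j → i = j := fun i hi j hj =>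
        hinj i (by omega) j (by omega)
      have hind := ih h1 g hinj'
      rw [Finset.sum_range_succ]
      have h0n : g 0 ≠ g n := fun h => by have := hinj 0 (by omega) n (by omega) h; omega
      have hnn1 : g n ≠ g (n+1) := fun h => by have := hinj n (by omega) (n+1) le_rfl h; omega
      have h0n1 : g 0 ≠ g (n+1) := fun h => by have := hinj 0 (by omega) (n+1) le_rfl h; omega
      have ht := (htriple (g 0) (g n) (g (n+1)) h0n hnn1 h0n1).2
      have hsk := hskew (g 0) (g (n+1)) h0n1
      push_cast
      nlinarith [hind, ht, hsk]

lemma cycle_sum_le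
    (hskew : ∀ i j, i ≠ j → A j i = -A i j)
    (htriple : ∀ i j k, i ≠ j → j ≠ k → i ≠ k →
      -1 ≤ A i j + A j k + A k i ∧ A i j + A j k + A k i ≤ 1)
    (c : Equiv.Perm (Fin d)) (hc : c.IsCycle) :
    ∑ i ∈ c.support, A i (c i) ≤ (c.support.card : ℝ) - 2 := by
  classical
  have hm2 : 2 ≤ c.support.card := hc.two_le_card_support
  obtain ⟨n, hn⟩ : ∃ n, c.support.card = n + 1 := ⟨c.support.card - 1, by omega⟩
  have hn1 : 1 ≤ n := by omega
  obtain ⟨x, hx, -⟩ := id hc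
  have hxs : x ∈ c.support := Equiv.Perm.mem_support.2 hx
  set g : ℕ → Fin d := fun j => (c ^ j) x with hg
  have hcyc : c.IsCycleOn (c.support : Set (Fin d)) := by
    rw [Equiv.Perm.coe_support_eq_set_support]
    exact hc.isCycleOn
  have hmod : ∀ a b : ℕ, g a = g b ↔ a ≡ b [MOD n + 1] := by
    intro a b
    rw [← hn]
    exact Equiv.Perm.IsCycleOn.pow_apply_eq_pow_apply hcyc hxs
  have hinj : ∀ i ≤ n, ∀ j ≤ n, g i = g j → i = j := by
    intro i hi j hj h
    have := (hmod i j).1 h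
    rwa [Nat.ModEq, Nat.mod_eq_of_lt (by omega), Nat.mod_eq_of_lt (by omega)] at this
  have hmem : ∀ j, g j ∈ c.support := fun j =>
    (Equiv.Perm.pow_apply_mem_support (n := j)).2 hxs
  have hstep : ∀ j, c (g j) = g (j + 1) := by
    intro j
    simp only [hg, pow_succ', Equiv.Perm.mul_apply]
  have hsum : ∑ i ∈ c.support, A i (c i) = ∑ j ∈ Finset.range (n+1), A (g j) (g (j+1)) := by
    rw [Finset.sum_bij (fun (j : ℕ) (_ : j ∈ Finset.range (n+1)) => g j)]
    · intro j hj; exact hmem j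
    · intro a ha b hb h
      exact hinj a (by have := Finset.mem_range.1 ha; omega) b
        (by have := Finset.mem_range.1 hb; omega) h
    · intro y hy
      have hsc : c.SameCycle x y := hc.sameCycle hx (Equiv.Perm.mem_support.1 hy)
      obtain ⟨i, hi, hiy⟩ := hsc.exists_pow_eq'
      rw [hc.orderOf, hn] at hi
      exact ⟨i, Finset.mem_range.2 hi, hiy⟩
    · intro j hj
      rw [hstep j]
  rw [hsum, hn, Finset.sum_range_succ]
  have hgm : g (n+1) = g 0 := (hmod (n+1) 0).2 (by simp [Nat.ModEq])
  have hpath := path_sum_le A hskew htriple n hn1 g hinj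
  have h0n : g 0 ≠ g n := fun h => by have := hinj 0 (by omega) n le_rfl h; omega
  have hflip : A (g n) (g (n+1)) = - A (g 0) (g n) := by
    rw [hgm, hskew (g 0) (g n) h0n]
  rw [hflip]
  push_cast
  nlinarith [hpath]

lemma supp_sum_le
    (hdiag : ∀ i, A i i = 1)
    (hskew : ∀ i j, i ≠ j → A j i = -A i j)
    (htriple : ∀ i j k, i ≠ j → j ≠ k → i ≠ k →
      -1 ≤ A i j + A j k + A k i ∧ A i j + A j k + A k i ≤ 1)
    (σ : Equiv.Perm (Fin d)) :
    ∑ i ∈ σ.support, A i (σ i) ≤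
      (σ.support.card : ℝ) - 2 * (Multiset.card σ.cycleType : ℝ) := by
  classical
  induction σ using Equiv.Perm.cycle_induction_on with
  | base_one => simp
  | base_cycles c hc =>
    rw [hc.cycleType]
    simpa using cycle_sum_le A hskew htriple c hc
  | induction_disjoint σ τ hd hc hσ hτ =>
    rw [Equiv.Perm.Disjoint.cycleType_mul hd, Equiv.Perm.Disjoint.support_mul hd,
      Finset.sum_union (Equiv.Perm.Disjoint.disjoint_support hd), Finset.card_union_of_disjoint (Equiv.Perm.Disjoint.disjoint_support hd)]
    have h1 : ∀ i ∈ σ.support, A i ((σ * τ) i) = A i (σ i) := by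
      intro i hi
      have : τ i = i := by
        by_contra h
        exact (Finset.disjoint_left.1 (Equiv.Perm.Disjoint.disjoint_support hd) hi) (Equiv.Perm.mem_support.2 h)
      simp [Equiv.Perm.mul_apply, this]
    have h2 : ∀ i ∈ τ.support, A i ((σ * τ) i) = A i (τ i) := by
      intro i hi
      have hti : τ i ∈ τ.support := Equiv.Perm.apply_mem_support.2 hi
      have : σ (τ i) = τ i := by
        by_contra h
        exact (Finset.disjoint_right.1 (Equiv.Perm.Disjoint.disjoint_support hd) hti) (Equiv.Perm.mem_support.2 h)
      simp [Equiv.Perm.mul_apply, this]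
    rw [Finset.sum_congr rfl h1, Finset.sum_congr rfl h2]
    push_cast [Multiset.card_add]
    linarith [hσ, hτ]

end aux

/-- for a matrix with unit diagonal, `a_{ji} = -a_{ij}` off the
diagonal, and `-1 ≤ a_{ij} + a_{jk} + a_{ki} ≤ 1` for pairwise distinct indices,
every permutation `σ` with `k` nontrivial cycles (that is, `k` is the cardinality
of the cycle type of `σ`) satisfies `Σ_i a_{i,σ(i)} ≤ d - 2k`. -/
theorem permSum_le_of_conditions (d : ℕ) (A : Matrix (Fin d) (Fin d) ℝ)
    (hdiag : ∀ i, A i i = 1)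
    (hskew : ∀ i j, i ≠ j → A j i = -A i j)
    (htriple : ∀ i j k, i ≠ j → j ≠ k → i ≠ k →
      -1 ≤ A i j + A j k + A k i ∧ A i j + A j k + A k i ≤ 1)
    (σ : Equiv.Perm (Fin d)) :
    ∑ i, A i (σ i) ≤ (d : ℝ) - 2 * (Multiset.card σ.cycleType : ℝ) := by
    classical
  have hsplit : ∑ i, A i (σ i) =
      ∑ i ∈ σ.support, A i (σ i) + ∑ i ∈ σ.supportᶜ, A i (σ i) :=
    (Finset.sum_add_sum_compl σ.support _).symm
  have hfix : ∑ i ∈ σ.supportᶜ, A i (σ i) = (σ.supportᶜ.card : ℝ) := by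
    rw [Finset.sum_congr rfl (fun i hi => ?_), Finset.sum_const, nsmul_eq_mul, mul_one]
    have : σ i = i := by
      have := Finset.mem_compl.1 hi
      simpa [Equiv.Perm.mem_support, not_not] using this
    rw [this, hdiag]
  have hcard : (σ.supportᶜ.card : ℝ) = (d : ℝ) - (σ.support.card : ℝ) := by
    have hle : σ.support.card ≤ d := by
      simpa using Finset.card_le_card (Finset.subset_univ σ.support)
    rw [Finset.card_compl, Fintype.card_fin, Nat.cast_sub hle]
  have h := supp_sum_le A hdiag hskew htriple σ
  rw [hsplit, hfix, hcard]
  linarith
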